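/- Let S = Q Λ Qᵀ be a spectral decomposition of a real symmetric N×N matrix S with the diagonal entries of Λ in non-increasing order, and let Λ_o be a fixed diagonal matrix with non-increasing diagonal entries. Then Q Λ_o Qᵀ is a best approximant of S in Frobenius norm within the set M = { V Λ_o Vᵀ : V ∈ O(N) }; that is, ‖S − Q Λ_o Qᵀ‖_F ≤ ‖S − V Λ_o Vᵀ‖_F for all V ∈ O(N). -/

import Mathlib

open Matrix

noncomputable def frobNorm {N : ℕ} (A : Matrix (Fin N) (Fin N) ℝ) : ℝ :=
  Real.sqrt (∑ i, ∑ j, (A i j) ^ 2)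

/-- Sum of squares of matrix entries as a trace. -/
lemma frob_sq_eq_trace {N : ℕ} (A : Matrix (Fin N) (Fin N) ℝ) :
    ∑ i, ∑ j, (A i j) ^ 2 = Matrix.trace (Aᵀ * A) := by
  rw [Finset.sum_comm]
  simp [Matrix.trace, Matrix.mul_apply, Matrix.diag, sq]

/-- Rearrangement-type bound for doubly stochastic matrices. -/
lemma ds_bound {N : ℕ} (a b : Fin N → ℝ)
    (ha : ∀ i j : Fin N, i ≤ j → a j ≤ a i)
    (hb : ∀ i j : Fin N, i ≤ j → b j ≤ b i)
    (P : Matrix (Fin N) (Fin N) ℝ) (hP : P ∈ doublyStochastic ℝ (Fin N)) :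
    ∑ i, ∑ j, P i j * (a i * b j) ≤ ∑ i, a i * b i := by
  have hmono : Monovary a b := by
    intro i j hij
    rcases le_total i j with h | h
    · exact absurd (hb i j h) (not_le.2 hij)
    · exact ha j i h
  obtain ⟨w, hw0, hw1, hwP⟩ := exists_eq_sum_perm_of_mem_doublyStochastic hP
  have hperm : ∀ σ : Equiv.Perm (Fin N),
      ∑ i, ∑ j, (σ.permMatrix ℝ) i j * (a i * b j) = ∑ i, a i * b (σ i) := by
    intro σ
    simp [Equiv.Perm.permMatrix, PEquiv.toMatrix_apply, Equiv.toPEquiv_apply, ite_mul]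
  have hP' : ∀ i j, P i j = ∑ σ, w σ * (σ.permMatrix ℝ) i j := by
    intro i j; rw [← hwP]
    simp [Matrix.sum_apply, Equiv.Perm.permMatrix, PEquiv.toMatrix_apply, mul_ite]
  calc ∑ i, ∑ j, P i j * (a i * b j)
      = ∑ i, ∑ j, ∑ σ, w σ * ((σ.permMatrix ℝ) i j * (a i * b j)) := by
        simp only [hP', Finset.sum_mul, mul_assoc]
    _ = ∑ σ, ∑ i, ∑ j, w σ * ((σ.permMatrix ℝ) i j * (a i * b j)) :=
        (Finset.sum_congr rfl fun i _ => Finset.sum_comm).trans Finset.sum_comm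
    _ = ∑ σ, w σ * ∑ i, a i * b (σ i) := by
        refine Finset.sum_congr rfl fun σ _ => ?_
        rw [← hperm σ, Finset.mul_sum]
        exact Finset.sum_congr rfl fun i _ => by rw [Finset.mul_sum]
    _ ≤ ∑ σ : Equiv.Perm (Fin N), w σ * ∑ i, a i * b i := by
        apply Finset.sum_le_sum
        intro σ _
        exact mul_le_mul_of_nonneg_left (hmono.sum_mul_comp_perm_le_sum_mul) (hw0 σ)
    _ = ∑ i, a i * b i := by rw [← Finset.sum_mul, hw1, one_mul]

/-- Best approximant with prescribed spectrum: if `S = Q Λ Qᵀ` with both `Λ`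
and `Λ_o` diagonal with non-increasing diagonals and `Q` orthogonal, then
`Q Λ_o Qᵀ` minimizes the Frobenius distance from `S` over
`M = { V Λ_o Vᵀ : V ∈ O(N) }`. -/
theorem best_isospectral_approximant {N : ℕ}
    (d Λo : Fin N → ℝ)
    (hd : ∀ i j : Fin N, i ≤ j → d j ≤ d i)
    (hΛo : ∀ i j : Fin N, i ≤ j → Λo j ≤ Λo i)
    (Q : Matrix (Fin N) (Fin N) ℝ) (hQ : Q ∈ Matrix.orthogonalGroup (Fin N) ℝ)
    (S : Matrix (Fin N) (Fin N) ℝ) (hS : S = Q * Matrix.diagonal d * Qᵀ) :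
    ∀ V ∈ Matrix.orthogonalGroup (Fin N) ℝ,
      frobNorm (S - Q * Matrix.diagonal Λo * Qᵀ) ≤
        frobNorm (S - V * Matrix.diagonal Λo * Vᵀ) := by
  intro V hV
  rw [Matrix.mem_orthogonalGroup_iff] at hQ hV
  have hQ1 : Q * Qᵀ = 1 := by simpa using hQ
  have hV1 : V * Vᵀ = 1 := by simpa using hV
  have hQ2 : Qᵀ * Q = 1 := mul_eq_one_comm.mp hQ1
  have hV2 : Vᵀ * V = 1 := mul_eq_one_comm.mp hV1
  set W : Matrix (Fin N) (Fin N) ℝ := Qᵀ * V with hW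
  have hW1 : W * Wᵀ = 1 := by
    rw [hW, Matrix.transpose_mul, Matrix.transpose_transpose, Matrix.mul_assoc,
      ← Matrix.mul_assoc V, hV1, Matrix.one_mul, hQ2]
  have hW2 : Wᵀ * W = 1 := mul_eq_one_comm.mp hW1
  -- a generic formula for the squared Frobenius distance
  have key : ∀ U : Matrix (Fin N) (Fin N) ℝ, U * Uᵀ = 1 → Uᵀ * U = 1 →
      ∑ i, ∑ j, ((S - U * Matrix.diagonal Λo * Uᵀ) i j) ^ 2 =
        Matrix.trace (Matrix.diagonal d * Matrix.diagonal d)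
        + Matrix.trace (Matrix.diagonal Λo * Matrix.diagonal Λo)
        - 2 * Matrix.trace (Matrix.diagonal d * (Qᵀ * U) * Matrix.diagonal Λo * (Qᵀ * U)ᵀ) := by
    intro U hU1 hU2
    rw [frob_sq_eq_trace]
    set B : Matrix (Fin N) (Fin N) ℝ := U * Matrix.diagonal Λo * Uᵀ with hB
    have hexp : (S - B)ᵀ * (S - B) = Sᵀ * S - Sᵀ * B - Bᵀ * S + Bᵀ * B := by
      rw [Matrix.transpose_sub, Matrix.sub_mul, Matrix.mul_sub, Matrix.mul_sub]
      abel
    rw [hexp]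
    have hSsym : Sᵀ = S := by
      rw [hS]; simp [Matrix.transpose_mul, Matrix.diagonal_transpose, Matrix.mul_assoc]
    have hBsym : Bᵀ = B := by
      rw [hB]; simp [Matrix.transpose_mul, Matrix.diagonal_transpose, Matrix.mul_assoc]
    have t1 : Matrix.trace (Sᵀ * S) = Matrix.trace (Matrix.diagonal d * Matrix.diagonal d) := by
      rw [hSsym, hS]
      rw [show Q * Matrix.diagonal d * Qᵀ * (Q * Matrix.diagonal d * Qᵀ)
          = Q * (Matrix.diagonal d * (Qᵀ * Q) * Matrix.diagonal d) * Qᵀ by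
        simp [Matrix.mul_assoc]]
      rw [hQ2, Matrix.mul_one, Matrix.trace_mul_cycle, ← Matrix.mul_assoc, hQ2,
        Matrix.one_mul]
    have t2 : Matrix.trace (Bᵀ * B) = Matrix.trace (Matrix.diagonal Λo * Matrix.diagonal Λo) := by
      rw [hBsym, hB]
      rw [show U * Matrix.diagonal Λo * Uᵀ * (U * Matrix.diagonal Λo * Uᵀ)
          = U * (Matrix.diagonal Λo * (Uᵀ * U) * Matrix.diagonal Λo) * Uᵀ by
        simp [Matrix.mul_assoc]]
      rw [hU2, Matrix.mul_one, Matrix.trace_mul_cycle, ← Matrix.mul_assoc, hU2,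
        Matrix.one_mul]
    have t3 : Matrix.trace (Sᵀ * B)
        = Matrix.trace (Matrix.diagonal d * (Qᵀ * U) * Matrix.diagonal Λo * (Qᵀ * U)ᵀ) := by
      rw [hSsym, hS, hB]
      rw [show Q * Matrix.diagonal d * Qᵀ * (U * Matrix.diagonal Λo * Uᵀ)
          = Q * (Matrix.diagonal d * Qᵀ * U * Matrix.diagonal Λo * Uᵀ) by
        simp [Matrix.mul_assoc]]
      rw [Matrix.trace_mul_comm]
      congr 1
      simp [Matrix.transpose_mul, Matrix.transpose_transpose, Matrix.mul_assoc]
    have t4 : Matrix.trace (Bᵀ * S)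
        = Matrix.trace (Matrix.diagonal d * (Qᵀ * U) * Matrix.diagonal Λo * (Qᵀ * U)ᵀ) := by
      rw [hBsym, ← t3, hSsym, Matrix.trace_mul_comm]
    rw [Matrix.trace_add, Matrix.trace_sub, Matrix.trace_sub, t1, t2, t3, t4]
    ring
  have eQ := key Q hQ1 hQ2
  have eV := key V hV1 hV2
  have htr : Matrix.trace (Matrix.diagonal d * (Qᵀ * V) * Matrix.diagonal Λo * (Qᵀ * V)ᵀ)
      ≤ Matrix.trace (Matrix.diagonal d * (Qᵀ * Q) * Matrix.diagonal Λo * (Qᵀ * Q)ᵀ) := by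
    rw [hQ2]
    simp only [Matrix.mul_one, Matrix.transpose_one]
    have lhs_eq : Matrix.trace (Matrix.diagonal d * W * Matrix.diagonal Λo * Wᵀ)
        = ∑ i, ∑ j, (W i j)^2 * (d i * Λo j) := by
      simp [Matrix.trace, Matrix.diag, Matrix.mul_apply, Matrix.diagonal,
        Finset.mul_sum, Finset.sum_mul]
      congr 1; ext i; congr 1; ext j; ring
    have rhs_eq : Matrix.trace (Matrix.diagonal d * Matrix.diagonal Λo)
        = ∑ i, d i * Λo i := by
      rw [Matrix.diagonal_mul_diagonal, Matrix.trace_diagonal]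
    rw [← hW, lhs_eq, rhs_eq]
    refine (le_of_eq (by simp only [Matrix.of_apply])).trans
      (ds_bound d Λo hd hΛo (Matrix.of fun i j => (W i j)^2) ?_)
    rw [mem_doublyStochastic_iff_sum]
    refine ⟨fun i j => sq_nonneg _, fun i => ?_, fun j => ?_⟩
    · have := congrFun (congrFun hW1 i) i
      simpa [Matrix.mul_apply, Matrix.one_apply, sq] using this
    · have := congrFun (congrFun hW2 j) j
      simpa [Matrix.mul_apply, Matrix.one_apply, sq] using this
  unfold frobNorm
  apply Real.sqrt_le_sqrt
  rw [eQ, eV]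
  linarith
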